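/- Let 0 < a ≤ b, let κ ≥ 0, and let t : ℝ → ℝ be differentiable on [a,b] with t(u) > 0 and 0 ≤ u·t'(u) ≤ κ·t(u) for all u ∈ [a,b]. Then for all u, ũ ∈ [a,b], |log t(u) − log t(ũ)| ≤ κ·|log u − log ũ|. -/

import Mathlib

/-- Logarithmic-Lipschitz estimate: if `0 ≤ u·t'(u) ≤ κ·t(u)` on `[a,b]` for a
positive differentiable travel-time function `t`, then
`|log t(u) − log t(ũ)| ≤ κ·|log u − log ũ|` on `[a,b]`. -/
theorem log_lipschitz_of_elasticity_bound
    (a b : ℝ) (ha : 0 < a) (hab : a ≤ b)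
    (κ : ℝ) (hκ : 0 ≤ κ)
    (t t' : ℝ → ℝ)
    (hderiv : ∀ u ∈ Set.Icc a b, HasDerivWithinAt t (t' u) (Set.Icc a b) u)
    (hpos : ∀ u ∈ Set.Icc a b, 0 < t u)
    (hlo : ∀ u ∈ Set.Icc a b, 0 ≤ u * t' u)
    (hhi : ∀ u ∈ Set.Icc a b, u * t' u ≤ κ * t u) :
    ∀ u ∈ Set.Icc a b, ∀ u' ∈ Set.Icc a b,
      |Real.log (t u) - Real.log (t u')| ≤ κ * |Real.log u - Real.log u'| := by
  have hupos : ∀ u ∈ Set.Icc a b, (0:ℝ) < u := fun u hu => lt_of_lt_of_le ha hu.1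
  have hIoo : Set.Ioo a b ⊆ Set.Icc a b := Set.Ioo_subset_Icc_self
  have hint : interior (Set.Icc a b) = Set.Ioo a b := interior_Icc
  -- g1 = log ∘ t is monotone on [a,b]
  have htcont : ContinuousOn t (Set.Icc a b) := fun u hu =>
    (hderiv u hu).continuousWithinAt
  have hmono1 : MonotoneOn (fun u => Real.log (t u)) (Set.Icc a b) := by
    apply monotoneOn_of_hasDerivWithinAt_nonneg (convex_Icc a b)
      (f' := fun u => t' u / t u)
    · exact Real.continuousOn_log.comp htcont
        (fun u hu => ne_of_gt (hpos u hu))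
    · intro x hx
      rw [hint] at hx
      exact hint ▸ ((hderiv x (hIoo hx)).mono hIoo).log
        (ne_of_gt (hpos x (hIoo hx)))
    · intro x hx
      rw [hint] at hx
      have hx' := hIoo hx
      have := hlo x hx'
      have hxpos := hupos x hx'
      have ht'nn : 0 ≤ t' x := nonneg_of_mul_nonneg_right this hxpos
      exact div_nonneg ht'nn (hpos x hx').le
  -- g2 = κ log u - log t u is monotone on [a,b]
  have hmono2 : MonotoneOn (fun u => κ * Real.log u - Real.log (t u)) (Set.Icc a b) := by
    apply monotoneOn_of_hasDerivWithinAt_nonneg (convex_Icc a b)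
      (f' := fun u => κ / u - t' u / t u)
    · apply ContinuousOn.sub
      · exact (Real.continuousOn_log.mono
          (fun u hu => ne_of_gt (hupos u hu))).const_smul κ |>.congr
          (fun u hu => rfl)
      · exact Real.continuousOn_log.comp htcont (fun u hu => ne_of_gt (hpos u hu))
    · intro x hx
      rw [hint] at hx
      have hx' := hIoo hx
      have h1 : HasDerivWithinAt (fun u => Real.log u) (1 / x) (Set.Ioo a b) x :=
        (Real.hasDerivAt_log (ne_of_gt (hupos x hx'))).hasDerivWithinAt.congr_deriv
          (by rw [one_div])
      have h2 : HasDerivWithinAt (fun u => Real.log (t u)) (t' x / t x) (Set.Ioo a b) x :=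
        ((hderiv x hx').mono hIoo).log (ne_of_gt (hpos x hx'))
      have := (h1.const_mul κ).sub h2
      simpa [mul_one_div, div_eq_mul_inv, Pi.sub_def] using this
    · intro x hx
      rw [hint] at hx
      have hx' := hIoo hx
      have hxpos := hupos x hx'
      have htpos := hpos x hx'
      rw [sub_nonneg, div_le_div_iff₀ htpos hxpos]
      calc t' x * x = x * t' x := mul_comm _ _
        _ ≤ κ * t x := hhi x hx'
  -- conclude by WLOG u ≤ u'
  have key : ∀ u ∈ Set.Icc a b, ∀ u' ∈ Set.Icc a b, u ≤ u' →
      |Real.log (t u) - Real.log (t u')| ≤ κ * |Real.log u - Real.log u'| := by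
    intro u hu u' hu' hle
    have h1 := hmono1 hu hu' hle
    have h2 := hmono2 hu hu' hle
    have hlog : Real.log u ≤ Real.log u' :=
      Real.log_le_log (hupos u hu) hle
    rw [abs_sub_comm, abs_of_nonneg (sub_nonneg.2 h1), abs_sub_comm,
      abs_of_nonneg (sub_nonneg.2 hlog)]
    simp only at h2
    linarith
  intro u hu u' hu'
  rcases le_total u u' with h | h
  · exact key u hu u' hu' h
  · rw [abs_sub_comm, abs_sub_comm (Real.log u)]
    exact key u' hu' u hu h
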